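/- arXiv:1801.01570 — 5 statements merged into one kernel-verified Lean document; each statement's English description precedes it below -/
import Mathlib

section
/- For all positive integers m and n, (1/2) = Σ_{k=1}^{m-1} [C(m,k)/C(m+n,k)] · [n/(m+n-k)] · (1/2) + Σ_{k=1}^{n-1} [C(n,k)/C(m+n,k)] · [m/(m+n-k)] · (1/2) + 1/C(m+n,n). -/
lemma urn_step (M N k : ℕ) (hkM : k < M) :
    ((Nat.choose M k : ℚ) / (Nat.choose (M + N) k)) * ((N : ℚ) / ((M : ℚ) + (N : ℚ) - (k : ℚ)))
      = (Nat.choose M k : ℚ) / (Nat.choose (M + N) k)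
        - (Nat.choose M (k+1) : ℚ) / (Nat.choose (M + N) (k+1)) := by
  have hkMN : k < M + N := lt_of_lt_of_le hkM (Nat.le_add_right _ _)
  have hb : (0:ℚ) < (Nat.choose (M+N) k : ℚ) := by exact_mod_cast Nat.choose_pos hkMN.le
  have hb' : (0:ℚ) < (Nat.choose (M+N) (k+1) : ℚ) := by exact_mod_cast Nat.choose_pos hkMN
  have hsub : ((M:ℚ) + N - k) ≠ 0 := by
    have : (k:ℚ) < (M:ℚ) + N := by exact_mod_cast hkMN
    linarith
  have hk1 : ((k:ℚ)+1) ≠ 0 := by positivity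
  have h1 : (Nat.choose M (k+1) : ℚ) * (k+1) = (Nat.choose M k : ℚ) * ((M:ℚ) - k) := by
    have h := Nat.choose_succ_right_eq M k
    zify [hkM.le] at h
    exact_mod_cast h
  have h2 : (Nat.choose (M+N) (k+1) : ℚ) * (k+1) = (Nat.choose (M+N) k : ℚ) * ((M:ℚ) + N - k) := by
    have h := Nat.choose_succ_right_eq (M+N) k
    zify [hkMN.le] at h
    exact_mod_cast h
  have e1 : (Nat.choose M (k+1) : ℚ) = (Nat.choose M k : ℚ) * ((M:ℚ) - k) / ((k:ℚ)+1) := by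
    field_simp; exact_mod_cast h1
  have e2 : (Nat.choose (M+N) (k+1) : ℚ)
      = (Nat.choose (M+N) k : ℚ) * ((M:ℚ) + N - k) / ((k:ℚ)+1) := by
    field_simp; exact_mod_cast h2
  rw [e1, e2]
  field_simp
  ring

lemma urn_key (M N : ℕ) (hM : 1 ≤ M) :
    ∑ k ∈ Finset.Icc 1 (M - 1), ((Nat.choose M k : ℚ) / (Nat.choose (M + N) k)) *
        ((N : ℚ) / ((M : ℚ) + (N : ℚ) - (k : ℚ)))
      = (M:ℚ) / ((M:ℚ) + (N:ℚ)) - 1 / (Nat.choose (M+N) M : ℚ) := by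
  have hIcc : Finset.Icc 1 (M-1) = Finset.Ico 1 M := by
    rw [← Finset.Ico_add_one_right_eq_Icc]; congr 1; omega
  rw [hIcc, Finset.sum_Ico_eq_sum_range]
  have hrw : ∀ i ∈ Finset.range (M - 1),
      ((Nat.choose M (1+i) : ℚ) / (Nat.choose (M + N) (1+i))) *
        ((N : ℚ) / ((M : ℚ) + (N : ℚ) - ((1+i : ℕ) : ℚ)))
      = (fun j => (Nat.choose M (j+1) : ℚ) / (Nat.choose (M + N) (j+1))) i
        - (fun j => (Nat.choose M (j+1) : ℚ) / (Nat.choose (M + N) (j+1))) (i+1) := by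
    intro i hi
    simp only [Finset.mem_range] at hi
    have hlt : i + 1 < M := by omega
    have hs := urn_step M N (i+1) hlt
    simp only [add_comm 1 i]
    convert hs using 3
  rw [Finset.sum_congr rfl hrw, Finset.sum_range_sub']
  have hM1 : M - 1 + 1 = M := by omega
  rw [hM1]
  simp only [zero_add, Nat.choose_one_right, Nat.choose_self, Nat.cast_one]
  push_cast
  ring

theorem urn_trivial_identity (m n : ℕ) (hm : 1 ≤ m) (hn : 1 ≤ n) :
    (1 / 2 : ℚ) =
      (∑ k ∈ Finset.Icc 1 (m - 1), ((Nat.choose m k : ℚ) / (Nat.choose (m + n) k)) *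
          ((n : ℚ) / ((m : ℚ) + (n : ℚ) - (k : ℚ))) * (1 / 2))
      + (∑ k ∈ Finset.Icc 1 (n - 1), ((Nat.choose n k : ℚ) / (Nat.choose (m + n) k)) *
          ((m : ℚ) / ((m : ℚ) + (n : ℚ) - (k : ℚ))) * (1 / 2))
      + 1 / (Nat.choose (m + n) n : ℚ) := by
  have h1 := urn_key m n hm
  have h2 := urn_key n m hn
  rw [Nat.choose_symm_add] at h1
  rw [Nat.add_comm n m] at h2
  simp only [add_comm (n:ℚ) (m:ℚ)] at h2
  have hc : ((m+n).choose n : ℚ) ≠ 0 := by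
    exact_mod_cast (Nat.choose_pos (Nat.le_add_left n m)).ne'
  have hmn : (m:ℚ) + (n:ℚ) ≠ 0 := by
    have : (0:ℚ) < m := by exact_mod_cast hm
    have : (0:ℚ) < n := by exact_mod_cast hn
    linarith
  rw [← Finset.sum_mul, ← Finset.sum_mul, h1, h2]
  field_simp
  ring
end

section
/- Define P : ℕ × ℕ → ℚ by P(m,0)=1 for all m, P(0,n)=0 for all n≥1, and for m,n≥1, P(m,n) = Σ_{k=1}^{m} [C(m,k)/C(m+n,k)] · [n/(m+n-k)] · P(m-k,n) + Σ_{k=1}^{n} [C(n,k)/C(m+n,k)] · [m/(m+n-k)] · P(m,n-k). Then P(m,n) = 1/2 for all m,n ≥ 1. -/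
private lemma urn_tele (m n k : ℕ) (hn : 1 ≤ n) (hk1 : 1 ≤ k) (hk : k ≤ m) :
    ((Nat.choose m k : ℚ) / (Nat.choose (m+n) k)) * ((n : ℚ) / ((m:ℚ)+n-k)) =
    (Nat.choose m k : ℚ)/(Nat.choose (m+n) k) - (Nat.choose m (k+1) : ℚ)/(Nat.choose (m+n) (k+1)) := by
  have hkm : k ≤ m + n := le_trans hk (Nat.le_add_right _ _)
  have hkm1 : k + 1 ≤ m + n := by omega
  have hB : ((m+n).choose k : ℚ) ≠ 0 := by
    exact_mod_cast (Nat.choose_pos hkm).ne'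
  have hB' : ((m+n).choose (k+1) : ℚ) ≠ 0 := by
    exact_mod_cast (Nat.choose_pos hkm1).ne'
  have hD : (m:ℚ)+n-k ≠ 0 := by
    have : (k:ℚ) < (m:ℚ)+n := by exact_mod_cast (by omega : k < m+n)
    linarith
  have hA : (m.choose (k+1) : ℚ) * (k+1) = (m.choose k) * ((m:ℚ) - k) := by
    have hc := congrArg (Nat.cast : ℕ → ℚ) (Nat.choose_succ_right_eq m k)
    push_cast [hk] at hc
    linarith
  have hBB : ((m+n).choose (k+1) : ℚ) * (k+1) = ((m+n).choose k) * ((m:ℚ) + n - k) := by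
    have hc := congrArg (Nat.cast : ℕ → ℚ) (Nat.choose_succ_right_eq (m+n) k)
    push_cast [hkm] at hc
    linarith
  have hk1' : ((k:ℚ)+1) ≠ 0 := by positivity
  have eB' : ((m+n).choose (k+1) : ℚ) = ((m+n).choose k) * ((m:ℚ)+n-k) / (k+1) := by
    rw [eq_div_iff hk1']; linarith
  have eA' : (m.choose (k+1) : ℚ) = (m.choose k) * ((m:ℚ)-k) / (k+1) := by
    rw [eq_div_iff hk1']; linarith
  rw [eB', eA']
  field_simp
  ring

private lemma urn_tele_sum_generic (g : ℕ → ℚ) :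
    ∀ m : ℕ, ∑ k ∈ Finset.Icc 1 m, (g k - g (k+1)) = g 1 - g (m+1) := by
  intro m
  induction m with
  | zero => simp
  | succ m ih =>
    rw [Finset.sum_Icc_succ_top (by omega : 1 ≤ m+1), ih]
    ring

private lemma urn_sum_tele (m n : ℕ) (hm : 1 ≤ m) (hn : 1 ≤ n) :
    ∑ k ∈ Finset.Icc 1 m, ((Nat.choose m k : ℚ) / (Nat.choose (m+n) k)) * ((n : ℚ) / ((m:ℚ)+n-k))
      = (m : ℚ) / ((m:ℚ)+n) := by
  have h1 : ∑ k ∈ Finset.Icc 1 m, ((Nat.choose m k : ℚ) / (Nat.choose (m+n) k)) * ((n : ℚ) / ((m:ℚ)+n-k))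
      = ∑ k ∈ Finset.Icc 1 m, ((fun j => (Nat.choose m j : ℚ)/(Nat.choose (m+n) j)) k
          - (fun j => (Nat.choose m j : ℚ)/(Nat.choose (m+n) j)) (k+1)) := by
    refine Finset.sum_congr rfl fun k hk => ?_
    rw [Finset.mem_Icc] at hk
    exact urn_tele m n k hn hk.1 hk.2
  rw [h1, urn_tele_sum_generic]
  rw [Nat.choose_one_right, Nat.choose_one_right,
    Nat.choose_eq_zero_of_lt (by omega : m < m+1)]
  push_cast
  simp

theorem urn_probability_half (P : ℕ → ℕ → ℚ)
    (hP1 : ∀ m, P m 0 = 1) (hP2 : ∀ n, 1 ≤ n → P 0 n = 0)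
    (hrec : ∀ m n : ℕ, 1 ≤ m → 1 ≤ n → P m n =
      (∑ k ∈ Finset.Icc 1 m, ((Nat.choose m k : ℚ) / (Nat.choose (m+n) k)) *
          ((n : ℚ) / ((m : ℚ) + (n : ℚ) - (k : ℚ))) * P (m - k) n)
      + (∑ k ∈ Finset.Icc 1 n, ((Nat.choose n k : ℚ) / (Nat.choose (m+n) k)) *
          ((m : ℚ) / ((m : ℚ) + (n : ℚ) - (k : ℚ))) * P m (n - k))) :
    ∀ m n : ℕ, 1 ≤ m → 1 ≤ n → P m n = 1 / 2 := by
  suffices H : ∀ s, ∀ m n : ℕ, m + n ≤ s → 1 ≤ m → 1 ≤ n → P m n = 1/2 by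
    exact fun m n hm hn => H (m+n) m n le_rfl hm hn
  intro s
  induction s with
  | zero => intro m n h hm hn; omega
  | succ s ih =>
    intro m n hmn hm hn
    -- values of P on subproblems
    have hPm : ∀ k, 1 ≤ k → k ≤ m → P (m - k) n = if k = m then 0 else 1/2 := by
      intro k h1 h2
      by_cases hkm : k = m
      · simp [hkm, hP2 n hn]
      · have : 1 ≤ m - k := by omega
        rw [if_neg hkm]
        exact ih (m-k) n (by omega) this hn
    have hPn : ∀ k, 1 ≤ k → k ≤ n → P m (n - k) = if k = n then 1 else 1/2 := by
      intro k h1 h2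
      by_cases hkn : k = n
      · simp [hkn, hP1 m]
      · have : 1 ≤ n - k := by omega
        rw [if_neg hkn]
        exact ih m (n-k) (by omega) hm this
    rw [hrec m n hm hn]
    -- rewrite summands
    have e1 : ∑ k ∈ Finset.Icc 1 m, ((Nat.choose m k : ℚ) / (Nat.choose (m+n) k)) *
          ((n : ℚ) / ((m : ℚ) + (n : ℚ) - (k : ℚ))) * P (m - k) n
        = ∑ k ∈ Finset.Icc 1 m, (((Nat.choose m k : ℚ) / (Nat.choose (m+n) k)) *
          ((n : ℚ) / ((m : ℚ) + (n : ℚ) - (k : ℚ))) * (1/2)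
          - (if k = m then ((Nat.choose m k : ℚ) / (Nat.choose (m+n) k)) *
          ((n : ℚ) / ((m : ℚ) + (n : ℚ) - (k : ℚ))) * (1/2) else 0)) := by
      refine Finset.sum_congr rfl fun k hk => ?_
      rw [Finset.mem_Icc] at hk
      rw [hPm k hk.1 hk.2]
      by_cases hkm : k = m <;> simp [hkm]
    have e2 : ∑ k ∈ Finset.Icc 1 n, ((Nat.choose n k : ℚ) / (Nat.choose (m+n) k)) *
          ((m : ℚ) / ((m : ℚ) + (n : ℚ) - (k : ℚ))) * P m (n - k)
        = ∑ k ∈ Finset.Icc 1 n, (((Nat.choose n k : ℚ) / (Nat.choose (m+n) k)) *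
          ((m : ℚ) / ((m : ℚ) + (n : ℚ) - (k : ℚ))) * (1/2)
          + (if k = n then ((Nat.choose n k : ℚ) / (Nat.choose (m+n) k)) *
          ((m : ℚ) / ((m : ℚ) + (n : ℚ) - (k : ℚ))) * (1/2) else 0)) := by
      refine Finset.sum_congr rfl fun k hk => ?_
      rw [Finset.mem_Icc] at hk
      rw [hPn k hk.1 hk.2]
      by_cases hkn : k = n <;> simp [hkn]; ring
    rw [e1, e2]
    rw [Finset.sum_sub_distrib, Finset.sum_add_distrib, ← Finset.sum_mul, ← Finset.sum_mul]
    rw [Finset.sum_ite_eq' (Finset.Icc 1 m) m, Finset.sum_ite_eq' (Finset.Icc 1 n) n]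
    rw [if_pos (Finset.mem_Icc.mpr ⟨hm, le_rfl⟩), if_pos (Finset.mem_Icc.mpr ⟨hn, le_rfl⟩)]
    rw [urn_sum_tele m n hm hn]
    have hsum2 : ∑ k ∈ Finset.Icc 1 n, ((Nat.choose n k : ℚ) / (Nat.choose (m+n) k)) *
          ((m : ℚ) / ((m : ℚ) + (n : ℚ) - (k : ℚ))) = (n : ℚ) / ((m:ℚ)+n) := by
      have := urn_sum_tele n m hn hm
      rw [Nat.add_comm n m] at this
      rw [show ((n:ℚ)+m) = ((m:ℚ)+n) by ring] at this
      convert this using 2 with k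
    rw [hsum2]
    have hcs : (((m+n).choose m : ℕ) : ℚ) = (((m+n).choose n : ℕ) : ℚ) := by
      exact_mod_cast congrArg (Nat.cast : ℕ → ℚ) (Nat.choose_symm_add)
    have h1 : (m:ℚ)+(n:ℚ)-(m:ℚ) = (n:ℚ) := by ring
    have h2 : (m:ℚ)+(n:ℚ)-(n:ℚ) = (m:ℚ) := by ring
    rw [h1, h2, Nat.choose_self, Nat.choose_self, hcs]
    have hC : (((m+n).choose n : ℕ) : ℚ) ≠ 0 := by
      exact_mod_cast (Nat.choose_pos (by omega : n ≤ m+n)).ne'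
    have hm0 : (m:ℚ) ≠ 0 := by positivity
    have hn0 : (n:ℚ) ≠ 0 := by positivity
    have hmn0 : (m:ℚ)+(n:ℚ) ≠ 0 := by positivity
    field_simp
    ring
end

section
/- With E defined by the urn solitaire expectation recurrence, E(m,n) = E(n,m) for all natural numbers m, n. -/
theorem urn_expectation_symmetric (E : ℕ → ℕ → ℚ)
    (hE1 : ∀ m, E m 0 = 0) (hE2 : ∀ n, E 0 n = 0)
    (hrec : ∀ m n : ℕ, 1 ≤ m → 1 ≤ n → E m n = 1
      + ∑ k ∈ Finset.Icc 1 m, ((Nat.choose m k : ℚ) / (Nat.choose (m+n) k)) * ((n : ℚ) / ((m : ℚ) + (n : ℚ) - (k : ℚ))) * E (m - k) n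
      + ∑ k ∈ Finset.Icc 1 n, ((Nat.choose n k : ℚ) / (Nat.choose (m+n) k)) * ((m : ℚ) / ((m : ℚ) + (n : ℚ) - (k : ℚ))) * E m (n - k)) :
    ∀ m n : ℕ, E m n = E n m := by
  have key : ∀ s m n : ℕ, m + n = s → E m n = E n m := by
    intro s
    induction s using Nat.strong_induction_on with
    | _ s ih =>
      intro m n hmn
      rcases Nat.eq_zero_or_pos m with hm | hm
      · subst hm; rw [hE1, hE2]
      rcases Nat.eq_zero_or_pos n with hn | hn
      · subst hn; rw [hE1, hE2]
      rw [hrec m n hm hn, hrec n m hn hm, Nat.add_comm n m]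
      have h1 : ∑ k ∈ Finset.Icc 1 m, ((Nat.choose m k : ℚ) / (Nat.choose (m+n) k)) * ((n : ℚ) / ((m : ℚ) + (n : ℚ) - (k : ℚ))) * E (m - k) n
          = ∑ k ∈ Finset.Icc 1 m, ((Nat.choose m k : ℚ) / (Nat.choose (m+n) k)) * ((n : ℚ) / ((n : ℚ) + (m : ℚ) - (k : ℚ))) * E n (m - k) := by
        apply Finset.sum_congr rfl
        intro k hk
        have hk1 := (Finset.mem_Icc.mp hk).1
        rw [ih (m - k + n) (by omega) (m - k) n rfl]
        ring
      have h2 : ∑ k ∈ Finset.Icc 1 n, ((Nat.choose n k : ℚ) / (Nat.choose (m+n) k)) * ((m : ℚ) / ((m : ℚ) + (n : ℚ) - (k : ℚ))) * E m (n - k)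
          = ∑ k ∈ Finset.Icc 1 n, ((Nat.choose n k : ℚ) / (Nat.choose (m+n) k)) * ((m : ℚ) / ((n : ℚ) + (m : ℚ) - (k : ℚ))) * E (n - k) m := by
        apply Finset.sum_congr rfl
        intro k hk
        have hk1 := (Finset.mem_Icc.mp hk).1
        rw [ih (m + (n - k)) (by omega) m (n - k) rfl]
        ring
      rw [h1, h2]
      ring
  intro m n
  exact key (m + n) m n rfl
end

section
/- For all positive integers m and n and all k with 1 ≤ k ≤ m, the probability that the first round of urn solitaire consists of exactly k balls of the green color followed by one red ball equals [C(m,k)/C(m+n,k)] · [n/(m+n-k)], and these probabilities together with the symmetric red-then-green ones sum to 1: Σ_{k=1}^{m} [C(m,k)/C(m+n,k)]·[n/(m+n-k)] + Σ_{k=1}^{n} [C(n,k)/C(m+n,k)]·[m/(m+n-k)] = 1. -/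
open Finset

lemma tele_icc (g : ℕ → ℚ) (m : ℕ) :
    ∑ k ∈ Finset.Icc 1 m, (g k - g (k+1)) = g 1 - g (m+1) := by
  induction m with
  | zero => simp
  | succ m ih =>
    rw [Finset.sum_Icc_succ_top (by omega : 1 ≤ m + 1), ih]
    ring

lemma key_step (A A' B B' M N Kk K : ℚ) (hB : B ≠ 0) (hB' : B' ≠ 0) (hK : K ≠ 0)
    (hD : M + N - Kk ≠ 0)
    (HA : A' * K = A * (M - Kk)) (HB : B' * K = B * (M + N - Kk)) :
    A / B * (N / (M + N - Kk)) = A / B - A' / B' := by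
  rw [div_sub_div _ _ hB hB', div_mul_div_comm, div_eq_div_iff (by positivity)
    (by positivity)]
  apply mul_left_cancel₀ hK
  linear_combination B * B * (M + N - Kk) * HA + (A * N * B - A * B * (M + N - Kk)) * HB

lemma urn_sum (m n : ℕ) (hm : 1 ≤ m) (hn : 1 ≤ n) :
    (∑ k ∈ Finset.Icc 1 m, ((Nat.choose m k : ℚ) / (Nat.choose (m + n) k)) *
        ((n : ℚ) / ((m : ℚ) + (n : ℚ) - (k : ℚ)))) = (m : ℚ) / ((m : ℚ) + n) := by
  have h1 : (∑ k ∈ Finset.Icc 1 m, ((Nat.choose m k : ℚ) / (Nat.choose (m + n) k)) *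
        ((n : ℚ) / ((m : ℚ) + (n : ℚ) - (k : ℚ))))
      = ∑ k ∈ Finset.Icc 1 m,
        (((Nat.choose m k : ℚ) / (Nat.choose (m + n) k)) -
         ((Nat.choose m (k+1) : ℚ) / (Nat.choose (m + n) (k+1)))) := by
    apply Finset.sum_congr rfl
    intro k hk
    simp only [Finset.mem_Icc] at hk
    have hkm : k ≤ m := hk.2
    have hB : (Nat.choose (m + n) k : ℚ) ≠ 0 := by
      exact_mod_cast Nat.choose_pos (by omega) |>.ne'
    have hB' : (Nat.choose (m + n) (k+1) : ℚ) ≠ 0 := by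
      exact_mod_cast Nat.choose_pos (by omega) |>.ne'
    have hD : (m : ℚ) + n - k ≠ 0 := by
      have : (k : ℚ) < (m : ℚ) + n := by exact_mod_cast (by omega : k < m + n)
      intro h; nlinarith
    have HA : (Nat.choose m (k+1) : ℚ) * (k+1) = (Nat.choose m k : ℚ) * ((m : ℚ) - k) := by
      have := Nat.choose_succ_right_eq m k
      have h2 : ((Nat.choose m (k+1) * (k+1) : ℕ) : ℚ) = ((Nat.choose m k * (m - k) : ℕ) : ℚ) := by
        exact_mod_cast this
      push_cast [Nat.cast_sub hkm] at h2
      linarith [h2]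
    have HB : (Nat.choose (m+n) (k+1) : ℚ) * (k+1) = (Nat.choose (m+n) k : ℚ) * ((m : ℚ) + n - k) := by
      have := Nat.choose_succ_right_eq (m+n) k
      have h2 : ((Nat.choose (m+n) (k+1) * (k+1) : ℕ) : ℚ) = ((Nat.choose (m+n) k * (m + n - k) : ℕ) : ℚ) := by
        exact_mod_cast this
      push_cast [Nat.cast_sub (by omega : k ≤ m + n)] at h2
      linarith [h2]
    exact key_step _ _ _ _ _ _ _ _ hB hB' (by positivity) hD HA HB
  rw [h1, tele_icc]
  have : Nat.choose m (m+1) = 0 := Nat.choose_eq_zero_of_lt (by omega)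
  simp [this, Nat.choose_one_right]

theorem urn_round_probabilities_sum_to_one (m n : ℕ) (hm : 1 ≤ m) (hn : 1 ≤ n) :
    (∑ k ∈ Finset.Icc 1 m, ((Nat.choose m k : ℚ) / (Nat.choose (m + n) k)) *
        ((n : ℚ) / ((m : ℚ) + (n : ℚ) - (k : ℚ))))
    + (∑ k ∈ Finset.Icc 1 n, ((Nat.choose n k : ℚ) / (Nat.choose (m + n) k)) *
        ((m : ℚ) / ((m : ℚ) + (n : ℚ) - (k : ℚ)))) = 1 := by
  have h1 := urn_sum m n hm hn
  have h2 := urn_sum n m hn hm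
  rw [Nat.add_comm n m] at h2
  have e2 : (∑ k ∈ Finset.Icc 1 n, ((Nat.choose n k : ℚ) / (Nat.choose (m + n) k)) *
        ((m : ℚ) / ((m : ℚ) + (n : ℚ) - (k : ℚ)))) = (n : ℚ) / ((n : ℚ) + m) := by
    rw [← h2]
    apply Finset.sum_congr rfl
    intro k _
    ring_nf
  rw [h1, e2]
  have hmn : (m : ℚ) + n ≠ 0 := by positivity
  field_simp
  ring
end

section
/- With E the urn solitaire expected duration, E(m,n) < m + n − 1 whenever m + n ≥ 3 and m, n ≥ 1. -/
open Finset

private lemma choose_ratio_step (m n k : ℕ) (hn : 1 ≤ n) (hk : k ≤ m) :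
    ((Nat.choose m k : ℚ) / (Nat.choose (m+n) k)) * ((n : ℚ) / ((m : ℚ) + (n : ℚ) - (k : ℚ)))
      = (Nat.choose m k : ℚ) / (Nat.choose (m+n) k)
        - (Nat.choose m (k+1) : ℚ) / (Nat.choose (m+n) (k+1)) := by
  have hkmn : k ≤ m + n := le_trans hk (Nat.le_add_right m n)
  have hk1mn : k + 1 ≤ m + n := by omega
  have hb : ((Nat.choose (m+n) k : ℚ)) ≠ 0 := by
    exact_mod_cast (Nat.choose_pos hkmn).ne'
  have hb' : ((Nat.choose (m+n) (k+1) : ℚ)) ≠ 0 := by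
    exact_mod_cast (Nat.choose_pos hk1mn).ne'
  have hkm : (k : ℚ) ≤ m := by exact_mod_cast hk
  have hn1 : (1 : ℚ) ≤ n := by exact_mod_cast hn
  have hd : (m : ℚ) + n - k ≠ 0 := by linarith [hkm, hn1]
  have h1 := Nat.choose_succ_right_eq m k
  have h2 := Nat.choose_succ_right_eq (m+n) k
  have hq1 : (Nat.choose m (k+1) : ℚ) * (k+1) = (Nat.choose m k : ℚ) * ((m:ℚ) - k) := by
    have := congrArg (fun x : ℕ => (x : ℚ)) h1
    push_cast [Nat.cast_sub hk] at this
    linarith [this]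
  have hq2 : (Nat.choose (m+n) (k+1) : ℚ) * (k+1) = (Nat.choose (m+n) k : ℚ) * ((m:ℚ) + n - k) := by
    have := congrArg (fun x : ℕ => (x : ℚ)) h2
    push_cast [Nat.cast_sub hkmn] at this
    linarith [this]
  have e1 : (Nat.choose m (k+1) : ℚ) / (Nat.choose (m+n) (k+1))
      = ((Nat.choose m k : ℚ) * ((m:ℚ) - k)) / ((Nat.choose (m+n) k : ℚ) * ((m:ℚ) + n - k)) := by
    rw [div_eq_div_iff hb' (mul_ne_zero hb hd)]
    linear_combination ((Nat.choose (m+n) (k+1) : ℚ)) * hq1 - (Nat.choose m (k+1) : ℚ) * hq2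
  rw [e1]
  field_simp
  ring

private lemma weight_sum (m n : ℕ) (hm : 1 ≤ m) (hn : 1 ≤ n) :
    ∑ k ∈ Icc 1 m, ((Nat.choose m k : ℚ) / (Nat.choose (m+n) k)) * ((n : ℚ) / ((m : ℚ) + (n : ℚ) - (k : ℚ)))
      = (m : ℚ) / ((m : ℚ) + (n : ℚ)) := by
  set f : ℕ → ℚ := fun k => (Nat.choose m k : ℚ) / (Nat.choose (m+n) k) with hf
  have step : ∀ k ∈ Icc 1 m,
      ((Nat.choose m k : ℚ) / (Nat.choose (m+n) k)) * ((n : ℚ) / ((m : ℚ) + (n : ℚ) - (k : ℚ)))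
        = f k - f (k+1) := by
    intro k hk
    simp only [mem_Icc] at hk
    exact choose_ratio_step m n k hn hk.2
  rw [Finset.sum_congr rfl step]
  have hIcc : Icc 1 m = Ico 1 (m+1) := by rw [Finset.Ico_add_one_right_eq_Icc]
  rw [hIcc, Finset.sum_Ico_eq_sum_range]
  simp only [Nat.add_sub_cancel]
  have tel : ∑ i ∈ range m, (f (1 + i) - f (1 + i + 1)) = f 1 - f (1 + m) := by
    have := Finset.sum_range_sub' (fun i => f (1 + i)) m
    simpa [add_assoc] using this
  rw [tel]
  have h1 : f 1 = (m : ℚ) / ((m : ℚ) + (n : ℚ)) := by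
    simp [hf, Nat.choose_one_right]
  have h2 : f (1 + m) = 0 := by
    simp [hf, Nat.choose_eq_zero_of_lt (by omega : m < 1 + m)]
  rw [h1, h2, sub_zero]

private lemma weight_nonneg (m n k : ℕ) (hk : k ≤ m) :
    0 ≤ ((Nat.choose m k : ℚ) / (Nat.choose (m+n) k)) * ((n : ℚ) / ((m : ℚ) + (n : ℚ) - (k : ℚ))) := by
  have hkm : (k : ℚ) ≤ m := by exact_mod_cast hk
  apply mul_nonneg
  · apply div_nonneg <;> positivity
  · apply div_nonneg
    · positivity
    · have : (0:ℚ) ≤ n := by positivity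
      linarith

private lemma E_le (E : ℕ → ℕ → ℚ)
    (hE1 : ∀ m, E m 0 = 0) (hE2 : ∀ n, E 0 n = 0)
    (hrec : ∀ m n : ℕ, 1 ≤ m → 1 ≤ n → E m n = 1
      + ∑ k ∈ Finset.Icc 1 m, ((Nat.choose m k : ℚ) / (Nat.choose (m+n) k)) * ((n : ℚ) / ((m : ℚ) + (n : ℚ) - (k : ℚ))) * E (m - k) n
      + ∑ k ∈ Finset.Icc 1 n, ((Nat.choose n k : ℚ) / (Nat.choose (m+n) k)) * ((m : ℚ) / ((m : ℚ) + (n : ℚ) - (k : ℚ))) * E m (n - k)) :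
    ∀ N m n : ℕ, m + n = N → 1 ≤ m → 1 ≤ n → E m n ≤ (m : ℚ) + (n : ℚ) - 1 := by
  intro N
  induction N using Nat.strong_induction_on with
  | _ N ih =>
  intro m n hN hm hn
  have hmQ : (1:ℚ) ≤ m := by exact_mod_cast hm
  have hnQ : (1:ℚ) ≤ n := by exact_mod_cast hn
  -- per-term bounds
  have hsub1 : ∀ k ∈ Icc 1 m, E (m - k) n ≤ (m:ℚ) + (n:ℚ) - 2 := by
    intro k hk
    simp only [mem_Icc] at hk
    by_cases h0 : m - k = 0
    · rw [h0, hE2]; linarith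
    · have h1 : 1 ≤ m - k := Nat.one_le_iff_ne_zero.mpr h0
      have hlt : (m - k) + n < N := by omega
      have := ih _ hlt (m-k) n rfl h1 hn
      have hc : ((m - k : ℕ) : ℚ) = (m:ℚ) - k := by
        push_cast [Nat.cast_sub hk.2]; ring
      rw [hc] at this
      have hkQ : (1:ℚ) ≤ k := by exact_mod_cast hk.1
      linarith
  have hsub2 : ∀ k ∈ Icc 1 n, E m (n - k) ≤ (m:ℚ) + (n:ℚ) - 2 := by
    intro k hk
    simp only [mem_Icc] at hk
    by_cases h0 : n - k = 0
    · rw [h0, hE1]; linarith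
    · have h1 : 1 ≤ n - k := Nat.one_le_iff_ne_zero.mpr h0
      have hlt : m + (n - k) < N := by omega
      have := ih _ hlt m (n-k) rfl hm h1
      have hc : ((n - k : ℕ) : ℚ) = (n:ℚ) - k := by
        push_cast [Nat.cast_sub hk.2]; ring
      rw [hc] at this
      have hkQ : (1:ℚ) ≤ k := by exact_mod_cast hk.1
      linarith
  rw [hrec m n hm hn]
  have hS1 : ∑ k ∈ Icc 1 m, ((Nat.choose m k : ℚ) / (Nat.choose (m+n) k)) * ((n : ℚ) / ((m : ℚ) + (n : ℚ) - (k : ℚ))) * E (m - k) n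
      ≤ ((m:ℚ) / ((m:ℚ) + (n:ℚ))) * ((m:ℚ) + (n:ℚ) - 2) := by
    calc ∑ k ∈ Icc 1 m, ((Nat.choose m k : ℚ) / (Nat.choose (m+n) k)) * ((n : ℚ) / ((m : ℚ) + (n : ℚ) - (k : ℚ))) * E (m - k) n
        ≤ ∑ k ∈ Icc 1 m, ((Nat.choose m k : ℚ) / (Nat.choose (m+n) k)) * ((n : ℚ) / ((m : ℚ) + (n : ℚ) - (k : ℚ))) * ((m:ℚ) + (n:ℚ) - 2) := by
          apply Finset.sum_le_sum
          intro k hk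
          have hkm : k ≤ m := (mem_Icc.mp hk).2
          exact mul_le_mul_of_nonneg_left (hsub1 k hk) (weight_nonneg m n k hkm)
      _ = (∑ k ∈ Icc 1 m, ((Nat.choose m k : ℚ) / (Nat.choose (m+n) k)) * ((n : ℚ) / ((m : ℚ) + (n : ℚ) - (k : ℚ)))) * ((m:ℚ) + (n:ℚ) - 2) := by
          rw [Finset.sum_mul]
      _ = ((m:ℚ) / ((m:ℚ) + (n:ℚ))) * ((m:ℚ) + (n:ℚ) - 2) := by
          rw [weight_sum m n hm hn]
  have hS2 : ∑ k ∈ Icc 1 n, ((Nat.choose n k : ℚ) / (Nat.choose (m+n) k)) * ((m : ℚ) / ((m : ℚ) + (n : ℚ) - (k : ℚ))) * E m (n - k)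
      ≤ ((n:ℚ) / ((m:ℚ) + (n:ℚ))) * ((m:ℚ) + (n:ℚ) - 2) := by
    calc ∑ k ∈ Icc 1 n, ((Nat.choose n k : ℚ) / (Nat.choose (m+n) k)) * ((m : ℚ) / ((m : ℚ) + (n : ℚ) - (k : ℚ))) * E m (n - k)
        ≤ ∑ k ∈ Icc 1 n, ((Nat.choose n k : ℚ) / (Nat.choose (m+n) k)) * ((m : ℚ) / ((m : ℚ) + (n : ℚ) - (k : ℚ))) * ((m:ℚ) + (n:ℚ) - 2) := by
          apply Finset.sum_le_sum
          intro k hk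
          have hkn : k ≤ n := (mem_Icc.mp hk).2
          have hw : 0 ≤ ((Nat.choose n k : ℚ) / (Nat.choose (m+n) k)) * ((m : ℚ) / ((m : ℚ) + (n : ℚ) - (k : ℚ))) := by
            have := weight_nonneg n m k hkn
            simpa [Nat.add_comm n m, add_comm (n:ℚ) (m:ℚ)] using this
          exact mul_le_mul_of_nonneg_left (hsub2 k hk) hw
      _ = (∑ k ∈ Icc 1 n, ((Nat.choose n k : ℚ) / (Nat.choose (m+n) k)) * ((m : ℚ) / ((m : ℚ) + (n : ℚ) - (k : ℚ)))) * ((m:ℚ) + (n:ℚ) - 2) := by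
          rw [Finset.sum_mul]
      _ = ((n:ℚ) / ((m:ℚ) + (n:ℚ))) * ((m:ℚ) + (n:ℚ) - 2) := by
          have := weight_sum n m hn hm
          rw [show n + m = m + n from Nat.add_comm n m] at this
          rw [show (n:ℚ) + (m:ℚ) = (m:ℚ) + (n:ℚ) from add_comm _ _] at this
          rw [this]
  have hne : (m:ℚ) + (n:ℚ) ≠ 0 := by linarith
  have hone : (m:ℚ) / ((m:ℚ) + (n:ℚ)) + (n:ℚ) / ((m:ℚ) + (n:ℚ)) = 1 := by
    rw [← add_div, div_self hne]
  nlinarith [hS1, hS2, hone]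

theorem urn_expectation_strict_upper_bound (E : ℕ → ℕ → ℚ)
    (hE1 : ∀ m, E m 0 = 0) (hE2 : ∀ n, E 0 n = 0)
    (hrec : ∀ m n : ℕ, 1 ≤ m → 1 ≤ n → E m n = 1
      + ∑ k ∈ Finset.Icc 1 m, ((Nat.choose m k : ℚ) / (Nat.choose (m+n) k)) * ((n : ℚ) / ((m : ℚ) + (n : ℚ) - (k : ℚ))) * E (m - k) n
      + ∑ k ∈ Finset.Icc 1 n, ((Nat.choose n k : ℚ) / (Nat.choose (m+n) k)) * ((m : ℚ) / ((m : ℚ) + (n : ℚ) - (k : ℚ))) * E m (n - k)) :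
    ∀ m n : ℕ, 1 ≤ m → 1 ≤ n → 3 ≤ m + n → E m n < (m : ℚ) + (n : ℚ) - 1 := by
  intro m n hm hn h3
  have hmQ : (1:ℚ) ≤ m := by exact_mod_cast hm
  have hnQ : (1:ℚ) ≤ n := by exact_mod_cast hn
  have h3Q : (3:ℚ) ≤ (m:ℚ) + (n:ℚ) := by exact_mod_cast h3
  have hsub1 : ∀ k ∈ Icc 1 m, E (m - k) n ≤ (m:ℚ) + (n:ℚ) - 2 := by
    intro k hk
    simp only [mem_Icc] at hk
    by_cases h0 : m - k = 0
    · rw [h0, hE2]; linarith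
    · have h1 : 1 ≤ m - k := Nat.one_le_iff_ne_zero.mpr h0
      have := E_le E hE1 hE2 hrec ((m-k)+n) (m-k) n rfl h1 hn
      have hc : ((m - k : ℕ) : ℚ) = (m:ℚ) - k := by
        push_cast [Nat.cast_sub hk.2]; ring
      rw [hc] at this
      have hkQ : (1:ℚ) ≤ k := by exact_mod_cast hk.1
      linarith
  have hsub2 : ∀ k ∈ Icc 1 n, E m (n - k) ≤ (m:ℚ) + (n:ℚ) - 2 := by
    intro k hk
    simp only [mem_Icc] at hk
    by_cases h0 : n - k = 0
    · rw [h0, hE1]; linarith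
    · have h1 : 1 ≤ n - k := Nat.one_le_iff_ne_zero.mpr h0
      have := E_le E hE1 hE2 hrec (m+(n-k)) m (n-k) rfl hm h1
      have hc : ((n - k : ℕ) : ℚ) = (n:ℚ) - k := by
        push_cast [Nat.cast_sub hk.2]; ring
      rw [hc] at this
      have hkQ : (1:ℚ) ≤ k := by exact_mod_cast hk.1
      linarith
  rw [hrec m n hm hn]
  -- strict bound on the first sum
  have hS1 : ∑ k ∈ Icc 1 m, ((Nat.choose m k : ℚ) / (Nat.choose (m+n) k)) * ((n : ℚ) / ((m : ℚ) + (n : ℚ) - (k : ℚ))) * E (m - k) n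
      < ((m:ℚ) / ((m:ℚ) + (n:ℚ))) * ((m:ℚ) + (n:ℚ) - 2) := by
    have hstrict : ∑ k ∈ Icc 1 m, ((Nat.choose m k : ℚ) / (Nat.choose (m+n) k)) * ((n : ℚ) / ((m : ℚ) + (n : ℚ) - (k : ℚ))) * E (m - k) n
        < ∑ k ∈ Icc 1 m, ((Nat.choose m k : ℚ) / (Nat.choose (m+n) k)) * ((n : ℚ) / ((m : ℚ) + (n : ℚ) - (k : ℚ))) * ((m:ℚ) + (n:ℚ) - 2) := by
      apply Finset.sum_lt_sum
      · intro k hk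
        have hkm : k ≤ m := (mem_Icc.mp hk).2
        exact mul_le_mul_of_nonneg_left (hsub1 k hk) (weight_nonneg m n k hkm)
      · refine ⟨m, mem_Icc.mpr ⟨hm, le_refl m⟩, ?_⟩
        have hmm : m - m = 0 := Nat.sub_self m
        rw [hmm, hE2, mul_zero]
        have hwpos : 0 < ((Nat.choose m m : ℚ) / (Nat.choose (m+n) m)) * ((n : ℚ) / ((m : ℚ) + (n : ℚ) - (m : ℚ))) := by
          apply mul_pos
          · apply div_pos
            · exact_mod_cast Nat.choose_pos (le_refl m)
            · exact_mod_cast Nat.choose_pos (Nat.le_add_right m n)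
          · apply div_pos (by linarith) (by linarith)
        nlinarith [hwpos]
    calc _ < ∑ k ∈ Icc 1 m, ((Nat.choose m k : ℚ) / (Nat.choose (m+n) k)) * ((n : ℚ) / ((m : ℚ) + (n : ℚ) - (k : ℚ))) * ((m:ℚ) + (n:ℚ) - 2) := hstrict
      _ = (∑ k ∈ Icc 1 m, ((Nat.choose m k : ℚ) / (Nat.choose (m+n) k)) * ((n : ℚ) / ((m : ℚ) + (n : ℚ) - (k : ℚ)))) * ((m:ℚ) + (n:ℚ) - 2) := by
          rw [Finset.sum_mul]
      _ = ((m:ℚ) / ((m:ℚ) + (n:ℚ))) * ((m:ℚ) + (n:ℚ) - 2) := by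
          rw [weight_sum m n hm hn]
  have hS2 : ∑ k ∈ Icc 1 n, ((Nat.choose n k : ℚ) / (Nat.choose (m+n) k)) * ((m : ℚ) / ((m : ℚ) + (n : ℚ) - (k : ℚ))) * E m (n - k)
      ≤ ((n:ℚ) / ((m:ℚ) + (n:ℚ))) * ((m:ℚ) + (n:ℚ) - 2) := by
    calc ∑ k ∈ Icc 1 n, ((Nat.choose n k : ℚ) / (Nat.choose (m+n) k)) * ((m : ℚ) / ((m : ℚ) + (n : ℚ) - (k : ℚ))) * E m (n - k)
        ≤ ∑ k ∈ Icc 1 n, ((Nat.choose n k : ℚ) / (Nat.choose (m+n) k)) * ((m : ℚ) / ((m : ℚ) + (n : ℚ) - (k : ℚ))) * ((m:ℚ) + (n:ℚ) - 2) := by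
          apply Finset.sum_le_sum
          intro k hk
          have hkn : k ≤ n := (mem_Icc.mp hk).2
          have hw : 0 ≤ ((Nat.choose n k : ℚ) / (Nat.choose (m+n) k)) * ((m : ℚ) / ((m : ℚ) + (n : ℚ) - (k : ℚ))) := by
            have := weight_nonneg n m k hkn
            simpa [Nat.add_comm n m, add_comm (n:ℚ) (m:ℚ)] using this
          exact mul_le_mul_of_nonneg_left (hsub2 k hk) hw
      _ = (∑ k ∈ Icc 1 n, ((Nat.choose n k : ℚ) / (Nat.choose (m+n) k)) * ((m : ℚ) / ((m : ℚ) + (n : ℚ) - (k : ℚ)))) * ((m:ℚ) + (n:ℚ) - 2) := by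
          rw [Finset.sum_mul]
      _ = ((n:ℚ) / ((m:ℚ) + (n:ℚ))) * ((m:ℚ) + (n:ℚ) - 2) := by
          have := weight_sum n m hn hm
          rw [show n + m = m + n from Nat.add_comm n m] at this
          rw [show (n:ℚ) + (m:ℚ) = (m:ℚ) + (n:ℚ) from add_comm _ _] at this
          rw [this]
  have hne : (m:ℚ) + (n:ℚ) ≠ 0 := by linarith
  have hone : (m:ℚ) / ((m:ℚ) + (n:ℚ)) + (n:ℚ) / ((m:ℚ) + (n:ℚ)) = 1 := by
    rw [← add_div, div_self hne]
  nlinarith [hS1, hS2, hone]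
end
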